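/- Let (A, B, C) be a recollement of abelian categories in which A, B and C all have enough projectives and enough injectives and both i^* and i^! are exact, let n ≥ 1, let (T1, F1) and (T2, F2) be n-cotorsion pairs in A and C respectively, and let (T, F) be the glued pair in B. Then T1 = i^*(T), F1 = i^!(F), T2 = j^*(T) and F2 = j^*(F). -/
import Mathlib


open CategoryTheory CategoryTheory.Limits CategoryTheory.Abelian ZeroObject

universe v u

namespace PaperRecollement

/-- The `k`-th Ext group of two objects in an abelian category,
as a type (it carries an `AddCommGroup` structure). -/
noncomputable def ExtGrp {D : Type u} [Category.{v} D] [Abelian D] (X Y : D) (k : ℕ) :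
    Type (max u v) :=
  letI : HasDerivedCategory.{max u v} D := HasDerivedCategory.standard D
  letI : HasExt.{max u v} D := hasExt_of_hasDerivedCategory D
  Abelian.Ext X Y k

noncomputable instance {D : Type u} [Category.{v} D] [Abelian D] (X Y : D) (k : ℕ) :
    AddCommGroup (ExtGrp X Y k) :=
  letI : HasDerivedCategory.{max u v} D := HasDerivedCategory.standard D
  letI : HasExt.{max u v} D := hasExt_of_hasDerivedCategory D
  inferInstanceAs (AddCommGroup (Abelian.Ext X Y k))

/-- `Ext^k(X, Y) = 0`. -/
def ExtVanish {D : Type u} [Category.{v} D] [Abelian D] (X Y : D) (k : ℕ) : Prop :=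
  Subsingleton (ExtGrp X Y k)

/-- A functor between abelian categories is exact if it is additive and preserves
short exact sequences. -/
structure IsExactFunctor {A : Type u} {B : Type u} [Category.{v} A] [Category.{v} B]
    [Abelian A] [Abelian B] (F : A ⥤ B) : Prop where
  additive : F.Additive
  preserves_shortExact : ∀ ⦃X Y Z : A⦄ (f : X ⟶ Y) (g : Y ⟶ Z) (w : f ≫ g = 0)
    (w' : F.map f ≫ F.map g = 0),
    (ShortComplex.mk f g w).ShortExact → (ShortComplex.mk (F.map f) (F.map g) w').ShortExact

/-- A recollement of abelian categories. -/
structure Recollement (A B C : Type u) [Category.{v} A] [Category.{v} B] [Category.{v} C]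
    [Abelian A] [Abelian B] [Abelian C] where
  /-- `i_* : A ⥤ B` -/
  iStar : A ⥤ B
  /-- `i^* : B ⥤ A` -/
  iUStar : B ⥤ A
  /-- `i^! : B ⥤ A` -/
  iShriek : B ⥤ A
  /-- `j^* : B ⥤ C` -/
  jUStar : B ⥤ C
  /-- `j_! : C ⥤ B` -/
  jShriek : C ⥤ B
  /-- `j_* : C ⥤ B` -/
  jStar : C ⥤ B
  adj₁ : iUStar ⊣ iStar
  adj₂ : iStar ⊣ iShriek
  adj₃ : jShriek ⊣ jUStar
  adj₄ : jUStar ⊣ jStar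
  iUStar_additive : iUStar.Additive
  iShriek_additive : iShriek.Additive
  jShriek_additive : jShriek.Additive
  jStar_additive : jStar.Additive
  iStar_full : iStar.Full
  iStar_faithful : iStar.Faithful
  jShriek_full : jShriek.Full
  jShriek_faithful : jShriek.Faithful
  jStar_full : jStar.Full
  jStar_faithful : jStar.Faithful
  iStar_exact : IsExactFunctor iStar
  jUStar_exact : IsExactFunctor jUStar
  essIm_iStar_eq_ker_jUStar : ∀ X : B,
    (∃ Y : A, Nonempty (iStar.obj Y ≅ X)) ↔ Nonempty (jUStar.obj X ≅ 0)

variable {D : Type u} [Category.{v} D] [Abelian D]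

/-- `Z^∧_m` : objects with a `Z`-resolution of length `m`. -/
def ResClass (Z : Set D) : ℕ → Set D
  | 0 => {C | ∃ Z₀ ∈ Z, Nonempty (Z₀ ≅ C)}
  | (m + 1) => {C | ∃ (K X : D) (f : K ⟶ X) (g : X ⟶ C) (w : f ≫ g = 0),
      (ShortComplex.mk f g w).ShortExact ∧ X ∈ Z ∧ K ∈ ResClass Z m}

/-- `Z^∨_m` : objects with a `Z`-coresolution of length `m`. -/
def CoresClass (Z : Set D) : ℕ → Set D
  | 0 => {C | ∃ Z₀ ∈ Z, Nonempty (C ≅ Z₀)}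
  | (m + 1) => {C | ∃ (X K : D) (f : C ⟶ X) (g : X ⟶ K) (w : f ≫ g = 0),
      (ShortComplex.mk f g w).ShortExact ∧ X ∈ Z ∧ K ∈ CoresClass Z m}

/-- Left `n`-cotorsion pair. -/
structure IsLeftNCotorsionPair (n : ℕ) (𝒳 𝒴 : Set D) : Prop where
  closed_summands : ∀ ⦃X X' : D⦄, X ∈ 𝒳 →
    (∃ (s : X' ⟶ X) (r : X ⟶ X'), s ≫ r = 𝟙 X') → X' ∈ 𝒳
  ext_vanish : ∀ ⦃X Y : D⦄, X ∈ 𝒳 → Y ∈ 𝒴 → ∀ k, 1 ≤ k → k ≤ n → ExtVanish X Y k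
  exists_ses : ∀ C : D, ∃ (K X : D) (f : K ⟶ X) (g : X ⟶ C) (w : f ≫ g = 0),
    (ShortComplex.mk f g w).ShortExact ∧ X ∈ 𝒳 ∧ K ∈ ResClass 𝒴 (n - 1)

/-- Right `n`-cotorsion pair. -/
structure IsRightNCotorsionPair (n : ℕ) (𝒳 𝒴 : Set D) : Prop where
  closed_summands : ∀ ⦃Y Y' : D⦄, Y ∈ 𝒴 →
    (∃ (s : Y' ⟶ Y) (r : Y ⟶ Y'), s ≫ r = 𝟙 Y') → Y' ∈ 𝒴
  ext_vanish : ∀ ⦃X Y : D⦄, X ∈ 𝒳 → Y ∈ 𝒴 → ∀ k, 1 ≤ k → k ≤ n → ExtVanish X Y k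
  exists_ses : ∀ C : D, ∃ (Y Z : D) (f : C ⟶ Y) (g : Y ⟶ Z) (w : f ≫ g = 0),
    (ShortComplex.mk f g w).ShortExact ∧ Y ∈ 𝒴 ∧ Z ∈ CoresClass 𝒳 (n - 1)

/-- `n`-cotorsion pair. -/
def IsNCotorsionPair (n : ℕ) (𝒳 𝒴 : Set D) : Prop :=
  IsLeftNCotorsionPair n 𝒳 𝒴 ∧ IsRightNCotorsionPair n 𝒳 𝒴

/-- Hereditary `n`-cotorsion pair. -/
def IsHereditaryNCotorsionPair (n : ℕ) (𝒳 𝒴 : Set D) : Prop :=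
  IsNCotorsionPair n 𝒳 𝒴 ∧ ∀ ⦃X Y : D⦄, X ∈ 𝒳 → Y ∈ 𝒴 → ExtVanish X Y (n + 1)

/-- The image class of a class of objects under a functor: objects isomorphic to
`F.obj X` for some `X ∈ S`. -/
def imgClass {A B : Type u} [Category.{v} A] [Category.{v} B] (F : A ⥤ B) (S : Set A) :
    Set B :=
  {Y | ∃ X ∈ S, Nonempty (F.obj X ≅ Y)}

/-- A pseudo cluster tilting subcategory of an abelian category, given as a class of
objects: a full additive iso-closed subcategory admitting the two approximation
short exact sequences. -/
structure IsPseudoClusterTilting (T : Set D) : Prop where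
  iso_closed : ∀ ⦃X Y : D⦄, X ∈ T → Nonempty (X ≅ Y) → Y ∈ T
  zero_mem : (0 : D) ∈ T
  biprod_mem : ∀ ⦃X Y : D⦄, X ∈ T → Y ∈ T → (X ⊞ Y) ∈ T
  left_approx : ∀ C : D, ∃ (T₁ T₂ : D) (f : C ⟶ T₁) (g : T₁ ⟶ T₂) (w : f ≫ g = 0),
    (ShortComplex.mk f g w).ShortExact ∧ T₁ ∈ T ∧ T₂ ∈ T ∧
      ∀ T' ∈ T, ∀ h : C ⟶ T', ∃ k : T₁ ⟶ T', f ≫ k = h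
  right_approx : ∀ C : D, ∃ (T₃ T₄ : D) (f : T₃ ⟶ T₄) (g : T₄ ⟶ C) (w : f ≫ g = 0),
    (ShortComplex.mk f g w).ShortExact ∧ T₃ ∈ T ∧ T₄ ∈ T ∧
      ∀ T' ∈ T, ∀ h : T' ⟶ C, ∃ k : T' ⟶ T₄, k ≫ g = h


variable {A B C : Type u} [Category.{v} A] [Category.{v} B] [Category.{v} C]
  [Abelian A] [Abelian B] [Abelian C]


lemma left_iso_closed {D : Type u} [Category.{v} D] [Abelian D] {n : ℕ} {𝒳 𝒴 : Set D}
    (h : IsLeftNCotorsionPair n 𝒳 𝒴) {X Y : D} (hX : X ∈ 𝒳) (e : X ≅ Y) : Y ∈ 𝒳 :=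
  h.closed_summands hX ⟨e.inv, e.hom, e.inv_hom_id⟩

lemma right_iso_closed {D : Type u} [Category.{v} D] [Abelian D] {n : ℕ} {𝒳 𝒴 : Set D}
    (h : IsRightNCotorsionPair n 𝒳 𝒴) {X Y : D} (hX : X ∈ 𝒴) (e : X ≅ Y) : Y ∈ 𝒴 :=
  h.closed_summands hX ⟨e.inv, e.hom, e.inv_hom_id⟩

lemma left_zero_mem {D : Type u} [Category.{v} D] [Abelian D] {n : ℕ} {𝒳 𝒴 : Set D}
    (h : IsLeftNCotorsionPair n 𝒳 𝒴) : (0 : D) ∈ 𝒳 := by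
  obtain ⟨K, X, f, g, w, hse, hX, hK⟩ := h.exists_ses 0
  exact h.closed_summands hX ⟨0, 0, by simp⟩

lemma right_zero_mem {D : Type u} [Category.{v} D] [Abelian D] {n : ℕ} {𝒳 𝒴 : Set D}
    (h : IsRightNCotorsionPair n 𝒳 𝒴) : (0 : D) ∈ 𝒴 := by
  obtain ⟨Y, Z, f, g, w, hse, hY, hZ⟩ := h.exists_ses 0
  exact h.closed_summands hY ⟨0, 0, by simp⟩

/-- the glued pair restricts back to the original `n`-cotorsion pairs. -/
theorem glued_nCotorsionPair_restrict
    [EnoughProjectives A] [EnoughInjectives A] [EnoughProjectives B] [EnoughInjectives B]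
    [EnoughProjectives C] [EnoughInjectives C]
    (R : Recollement A B C)
    (hiU : IsExactFunctor R.iUStar) (hiS : IsExactFunctor R.iShriek)
    (n : ℕ) (hn : 1 ≤ n) (T₁ F₁ : Set A) (T₂ F₂ : Set C)
    (h₁ : IsNCotorsionPair n T₁ F₁) (h₂ : IsNCotorsionPair n T₂ F₂) :
    T₁ = imgClass R.iUStar {X : B | R.iUStar.obj X ∈ T₁ ∧ R.jUStar.obj X ∈ T₂} ∧
    F₁ = imgClass R.iShriek {X : B | R.iShriek.obj X ∈ F₁ ∧ R.jUStar.obj X ∈ F₂} ∧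
    T₂ = imgClass R.jUStar {X : B | R.iUStar.obj X ∈ T₁ ∧ R.jUStar.obj X ∈ T₂} ∧
    F₂ = imgClass R.jUStar {X : B | R.iShriek.obj X ∈ F₁ ∧ R.jUStar.obj X ∈ F₂} := by
  haveI := R.iStar_full; haveI := R.iStar_faithful
  haveI := R.jShriek_full; haveI := R.jShriek_faithful
  haveI := R.jStar_full; haveI := R.jStar_faithful
  -- j^* (i_* Y) is zero
  have hjz : ∀ Y : A, IsZero (R.jUStar.obj (R.iStar.obj Y)) := by
    intro Y
    obtain ⟨e⟩ := (R.essIm_iStar_eq_ker_jUStar (R.iStar.obj Y)).1 ⟨Y, ⟨Iso.refl _⟩⟩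
    exact (isZero_zero C).of_iso e
  -- i^* (j_! X) is zero
  have hiz : ∀ X : C, IsZero (R.iUStar.obj (R.jShriek.obj X)) := by
    intro X
    rw [IsZero.iff_id_eq_zero]
    haveI : Subsingleton (R.jShriek.obj X ⟶ R.iStar.obj (R.iUStar.obj (R.jShriek.obj X))) := by
      haveI : Subsingleton (X ⟶ R.jUStar.obj (R.iStar.obj (R.iUStar.obj (R.jShriek.obj X)))) :=
        ⟨fun f g => (hjz _).eq_of_tgt f g⟩
      exact (R.adj₃.homEquiv _ _).subsingleton
    haveI : Subsingleton (R.iUStar.obj (R.jShriek.obj X) ⟶ R.iUStar.obj (R.jShriek.obj X)) :=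
      (R.adj₁.homEquiv _ _).subsingleton
    exact Subsingleton.elim _ _
  -- i^! (j_* X) is zero
  have hsz : ∀ X : C, IsZero (R.iShriek.obj (R.jStar.obj X)) := by
    intro X
    rw [IsZero.iff_id_eq_zero]
    haveI : Subsingleton (R.iStar.obj (R.iShriek.obj (R.jStar.obj X)) ⟶ R.jStar.obj X) := by
      haveI : Subsingleton (R.jUStar.obj (R.iStar.obj (R.iShriek.obj (R.jStar.obj X))) ⟶ X) :=
        ⟨fun f g => (hjz _).eq_of_src f g⟩
      exact ((R.adj₄.homEquiv _ _).symm).subsingleton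
    haveI : Subsingleton (R.iShriek.obj (R.jStar.obj X) ⟶ R.iShriek.obj (R.jStar.obj X)) :=
      ((R.adj₂.homEquiv _ _).symm).subsingleton
    exact Subsingleton.elim _ _
  obtain ⟨h₁l, h₁r⟩ := h₁
  obtain ⟨h₂l, h₂r⟩ := h₂
  refine ⟨?_, ?_, ?_, ?_⟩
  · apply subset_antisymm
    · intro X₁ hX₁
      have e : R.iUStar.obj (R.iStar.obj X₁) ≅ X₁ := asIso (R.adj₁.counit.app X₁)
      refine ⟨R.iStar.obj X₁, ⟨left_iso_closed h₁l hX₁ e.symm, ?_⟩, ⟨e⟩⟩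
      exact left_iso_closed h₂l (left_zero_mem h₂l) ((hjz X₁).isoZero.symm)
    · rintro Y ⟨X, ⟨hX, _⟩, ⟨e⟩⟩
      exact left_iso_closed h₁l hX e
  · apply subset_antisymm
    · intro Y₁ hY₁
      have e : Y₁ ≅ R.iShriek.obj (R.iStar.obj Y₁) := asIso (R.adj₂.unit.app Y₁)
      refine ⟨R.iStar.obj Y₁, ⟨right_iso_closed h₁r hY₁ e, ?_⟩, ⟨e.symm⟩⟩
      exact right_iso_closed h₂r (right_zero_mem h₂r) ((hjz Y₁).isoZero.symm)
    · rintro Y ⟨X, ⟨hX, _⟩, ⟨e⟩⟩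
      exact right_iso_closed h₁r hX e
  · apply subset_antisymm
    · intro X₂ hX₂
      have e : X₂ ≅ R.jUStar.obj (R.jShriek.obj X₂) := asIso (R.adj₃.unit.app X₂)
      refine ⟨R.jShriek.obj X₂, ⟨?_, left_iso_closed h₂l hX₂ e⟩, ⟨e.symm⟩⟩
      exact left_iso_closed h₁l (left_zero_mem h₁l) ((hiz X₂).isoZero.symm)
    · rintro Y ⟨X, ⟨_, hX⟩, ⟨e⟩⟩
      exact left_iso_closed h₂l hX e
  · apply subset_antisymm
    · intro Y₂ hY₂
      have e : R.jUStar.obj (R.jStar.obj Y₂) ≅ Y₂ := asIso (R.adj₄.counit.app Y₂)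
      refine ⟨R.jStar.obj Y₂, ⟨?_, right_iso_closed h₂r hY₂ e.symm⟩, ⟨e⟩⟩
      exact right_iso_closed h₁r (right_zero_mem h₁r) ((hsz Y₂).isoZero.symm)
    · rintro Y ⟨X, ⟨_, hX⟩, ⟨e⟩⟩
      exact right_iso_closed h₂r hX e

end PaperRecollement
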